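/- The shuffle algebra ⊕_{d≥0} Q[x_1,...,x_d]^{S_d} with product (f*g) = Σ_{(d,e)-shuffles σ} f(x_{σ(1)},...,x_{σ(d)}) g(x_{σ(d+1)},...,x_{σ(d+e)}) is a polynomial (free commutative) algebra on the generators φ_0, φ_1, φ_2, ..., where φ_i ∈ Q[x] is x^i. -/

import Mathlib

open MvPolynomial Finset

attribute [local instance] Classical.propDecidable

/-- `(d,e)`-shuffles. -/
def IsShuffle {d e : ℕ} (σ : Equiv.Perm (Fin (d + e))) : Prop :=
  StrictMono (fun i : Fin d => σ (Fin.castAdd e i)) ∧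
    StrictMono (fun j : Fin e => σ (Fin.natAdd d j))

/-- The CoHa product of the one-loop quiver:
`(f*g)(x_1,…,x_{d+e}) = Σ_σ f(x_{σ(1)},…,x_{σ(d)}) g(x_{σ(d+1)},…,x_{σ(d+e)})`,
the sum over `(d,e)`-shuffles. -/
noncomputable def loopMul {d e : ℕ} (f : MvPolynomial (Fin d) ℚ)
    (g : MvPolynomial (Fin e) ℚ) : MvPolynomial (Fin (d + e)) ℚ :=
  ∑ σ ∈ Finset.univ.filter (fun σ : Equiv.Perm (Fin (d + e)) => IsShuffle σ),
    rename (fun i : Fin d => σ (Fin.castAdd e i)) f *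
      rename (fun j : Fin e => σ (Fin.natAdd d j)) g

/-- `φ_i(x) = x^i ∈ ℚ[x]`. -/
noncomputable def phiF (i : ℕ) : MvPolynomial (Fin 1) ℚ := X 0 ^ i

/-- Iterated product `φ_{k_1} * ⋯ * φ_{k_d}`. -/
noncomputable def iterLoop : (d : ℕ) → (Fin d → ℕ) → MvPolynomial (Fin d) ℚ
  | 0, _ => 1
  | d + 1, k => loopMul (iterLoop d (fun i => k i.castSucc)) (phiF (k (Fin.last d)))

section Aux


variable {d e : ℕ}

lemma range_castAdd (d e : ℕ) :
    Set.range (fun i : Fin d => (Fin.castAdd e i : Fin (d+e))) = {x : Fin (d+e) | (x:ℕ) < d} := by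
  ext x
  constructor
  · rintro ⟨i, rfl⟩; exact i.2
  · intro hx; exact ⟨⟨x, hx⟩, by ext; simp⟩

lemma range_natAdd (d e : ℕ) :
    Set.range (fun j : Fin e => (Fin.natAdd d j : Fin (d+e))) = {x : Fin (d+e) | (x:ℕ) < d}ᶜ := by
  ext x
  constructor
  · rintro ⟨j, rfl⟩; simp
  · intro hx
    simp only [Set.mem_compl_iff, Set.mem_setOf_eq, not_lt] at hx
    refine ⟨⟨x - d, by omega⟩, ?_⟩
    ext; simp; omega

lemma shuffle_range_natAdd (σ : Equiv.Perm (Fin (d+e))) :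
    Set.range (fun j : Fin e => σ (Fin.natAdd d j)) =
      (Set.range (fun i : Fin d => σ (Fin.castAdd e i)))ᶜ := by
  have h1 : Set.range (fun j : Fin e => σ (Fin.natAdd d j))
      = σ '' Set.range (fun j : Fin e => (Fin.natAdd d j : Fin (d+e))) := by
    rw [← Set.range_comp]; rfl
  have h2 : Set.range (fun i : Fin d => σ (Fin.castAdd e i))
      = σ '' Set.range (fun i : Fin d => (Fin.castAdd e i : Fin (d+e))) := by
    rw [← Set.range_comp]; rfl
  rw [h1, h2, range_natAdd, range_castAdd, Set.image_compl_eq σ.bijective]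

lemma strictMono_eq_of_range_eq {n m : ℕ} {f g : Fin n → Fin m} (hf : StrictMono f)
    (hg : StrictMono g) (h : Set.range f = Set.range g) : f = g := by
  have : WellFoundedLT (Fin n) := inferInstance
  exact (hf.range_inj hg).mp h

lemma cplcard (S : {S : Finset (Fin (d+e)) // S.card = d}) : S.1ᶜ.card = e := by
  rw [Finset.card_compl, S.2]; simp

noncomputable def permOf (S : {S : Finset (Fin (d+e)) // S.card = d}) :
    Equiv.Perm (Fin (d+e)) :=
  finSumFinEquiv.symm.trans <|
    (Equiv.sumCongr (S.1.orderIsoOfFin S.2).toEquiv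
      (((S.1ᶜ).orderIsoOfFin (cplcard S)).toEquiv.trans
        (Equiv.subtypeEquivRight (fun x => Finset.mem_compl)))).trans
      (Equiv.sumCompl (· ∈ S.1))

lemma permOf_castAdd (S : {S : Finset (Fin (d+e)) // S.card = d}) (i : Fin d) :
    permOf S (Fin.castAdd e i) = S.1.orderEmbOfFin S.2 i := by
  simp [permOf, finSumFinEquiv_symm_apply_castAdd, Finset.coe_orderIsoOfFin_apply]

lemma permOf_natAdd (S : {S : Finset (Fin (d+e)) // S.card = d}) (j : Fin e) :
    permOf S (Fin.natAdd d j) = (S.1ᶜ).orderEmbOfFin (cplcard S) j := by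
  simp [permOf, finSumFinEquiv_symm_apply_natAdd, Equiv.subtypeEquivRight,
    Finset.coe_orderIsoOfFin_apply]
  rfl

lemma imgcard (σ : Equiv.Perm (Fin (d+e))) (hσ : IsShuffle σ) :
    (Finset.image (fun i : Fin d => σ (Fin.castAdd e i)) univ).card = d := by
  rw [Finset.card_image_of_injective _ hσ.1.injective, card_univ, Fintype.card_fin]

lemma coe_img (σ : Equiv.Perm (Fin (d+e))) :
    ((Finset.image (fun i : Fin d => σ (Fin.castAdd e i)) univ : Finset (Fin (d+e))) : Set (Fin (d+e)))
      = Set.range (fun i : Fin d => σ (Fin.castAdd e i)) := by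
  rw [Finset.coe_image, Finset.coe_univ, Set.image_univ]

lemma enum_castAdd (σ : Equiv.Perm (Fin (d+e))) (hσ : IsShuffle σ) :
    (fun i : Fin d => σ (Fin.castAdd e i)) =
      fun i => (Finset.image (fun i : Fin d => σ (Fin.castAdd e i)) univ).orderEmbOfFin
        (imgcard σ hσ) i := by
  refine strictMono_eq_of_range_eq hσ.1 (Finset.orderEmbOfFin _ _).strictMono ?_
  rw [Finset.range_orderEmbOfFin, coe_img]

lemma enum_natAdd (σ : Equiv.Perm (Fin (d+e))) (hσ : IsShuffle σ) :
    (fun j : Fin e => σ (Fin.natAdd d j)) =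
      fun j => ((Finset.image (fun i : Fin d => σ (Fin.castAdd e i)) univ)ᶜ).orderEmbOfFin
        (cplcard ⟨_, imgcard σ hσ⟩) j := by
  refine strictMono_eq_of_range_eq hσ.2 (Finset.orderEmbOfFin _ _).strictMono ?_
  rw [Finset.range_orderEmbOfFin, Finset.coe_compl, coe_img, shuffle_range_natAdd]

lemma isShuffle_permOf (S : {S : Finset (Fin (d+e)) // S.card = d}) :
    IsShuffle (permOf S) := by
  constructor
  · have h : (fun i : Fin d => permOf S (Fin.castAdd e i))
        = fun i => S.1.orderEmbOfFin S.2 i := funext (permOf_castAdd S)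
    rw [h]; exact (Finset.orderEmbOfFin _ _).strictMono
  · have h : (fun j : Fin e => permOf S (Fin.natAdd d j))
        = fun j => S.1ᶜ.orderEmbOfFin (cplcard S) j := funext (permOf_natAdd S)
    rw [h]; exact (Finset.orderEmbOfFin _ _).strictMono

lemma loopMul_eq (f : MvPolynomial (Fin d) ℚ) (g : MvPolynomial (Fin e) ℚ) :
    loopMul f g = ∑ S : {S : Finset (Fin (d+e)) // S.card = d},
      rename (fun i => S.1.orderEmbOfFin S.2 i) f *
        rename (fun j => S.1ᶜ.orderEmbOfFin (cplcard S) j) g := by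
  rw [loopMul]
  refine Finset.sum_bij'
    (fun σ hσ => (⟨Finset.image (fun i : Fin d => σ (Fin.castAdd e i)) univ,
      imgcard σ (Finset.mem_filter.mp hσ).2⟩ : {S : Finset (Fin (d+e)) // S.card = d}))
    (fun S _ => permOf S) (fun σ hσ => Finset.mem_univ _)
    (fun S _ => Finset.mem_filter.mpr ⟨Finset.mem_univ _, isShuffle_permOf S⟩)
    ?_ ?_ ?_
  · -- left_inv : permOf (image σ∘castAdd) = σ
    intro σ hσ
    have hsh := (Finset.mem_filter.mp hσ).2
    refine Equiv.ext fun x => ?_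
    refine Fin.addCases (fun i => ?_) (fun j => ?_) x
    · rw [permOf_castAdd]
      exact (congrFun (enum_castAdd σ hsh) i).symm
    · rw [permOf_natAdd]
      exact (congrFun (enum_natAdd σ hsh) j).symm
  · -- right_inv : image of (permOf S)∘castAdd = S
    intro S _
    refine Subtype.ext ?_
    refine Finset.coe_injective ?_
    rw [coe_img]
    have h : (fun i : Fin d => permOf S (Fin.castAdd e i))
        = fun i => S.1.orderEmbOfFin S.2 i := funext (permOf_castAdd S)
    rw [h]
    exact Finset.range_orderEmbOfFin _ _
  · -- term equality
    intro σ hσ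
    have hsh := (Finset.mem_filter.mp hσ).2
    exact congrArg₂ (· * ·) (congrArg (fun u => rename u f) (enum_castAdd σ hsh))
      (congrArg (fun u => rename u g) (enum_natAdd σ hsh))

lemma rename_eq_of_range_eq {β : Type} [Fintype β] [DecidableEq β]
    {f : MvPolynomial (Fin d) ℚ} (hf : f.IsSymmetric)
    {u v : Fin d → β} (hu : Function.Injective u) (hv : Function.Injective v)
    (h : Set.range u = Set.range v) : rename u f = rename v f := by
  have hvx : ∀ x, ∃ y, u y = v x := fun x => by
    have : v x ∈ Set.range u := h ▸ Set.mem_range_self x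
    exact this
  choose π hπ using hvx
  have hπinj : Function.Injective π := fun a b hab => by
    apply hv; rw [← hπ a, ← hπ b, hab]
  have hπbij : Function.Bijective π := Finite.injective_iff_bijective.mp hπinj
  have hren : rename (Equiv.ofBijective π hπbij) f = f := hf _
  calc rename u f = rename u (rename (Equiv.ofBijective π hπbij) f) := by rw [hren]
    _ = rename (fun x => u (π x)) f := by rw [rename_rename]; rfl
    _ = rename v f := by rw [funext hπ]

lemma loopMul_comm (f : MvPolynomial (Fin d) ℚ) (g : MvPolynomial (Fin e) ℚ)
    (hf : f.IsSymmetric) (hg : g.IsSymmetric) :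
    loopMul f g = rename (⇑(finAddFlip : Fin (e + d) ≃ Fin (d + e))) (loopMul g f) := by
  classical
  set Flip := (finAddFlip : Fin (e + d) ≃ Fin (d + e)) with hFlip
  rw [loopMul_eq f g, loopMul_eq g f, map_sum]
  have hΦcard : ∀ T : {T : Finset (Fin (e+d)) // T.card = e},
      ((T.1.map Flip.toEmbedding)ᶜ : Finset (Fin (d+e))).card = d := by
    intro T
    rw [Finset.card_compl, Finset.card_map, T.2, Fintype.card_fin]
    omega
  set Φ : {T : Finset (Fin (e+d)) // T.card = e} → {S : Finset (Fin (d+e)) // S.card = d} :=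
    fun T => ⟨(T.1.map Flip.toEmbedding)ᶜ, hΦcard T⟩ with hΦ
  have hΨcard : ∀ S : {S : Finset (Fin (d+e)) // S.card = d},
      ((S.1ᶜ.map Flip.symm.toEmbedding) : Finset (Fin (e+d))).card = e := by
    intro S
    rw [Finset.card_map, Finset.card_compl, S.2, Fintype.card_fin]
    omega
  have hbij : Function.Bijective Φ := by
    refine Function.bijective_iff_has_inverse.mpr
      ⟨fun S => ⟨S.1ᶜ.map Flip.symm.toEmbedding, hΨcard S⟩, fun T => ?_, fun S => ?_⟩
    · refine Subtype.ext ?_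
      simp only [hΦ, compl_compl]
      ext x
      simp [Finset.mem_map_equiv]
    · refine Subtype.ext ?_
      simp only [hΦ]
      ext x
      simp [Finset.mem_map_equiv]
  refine (Fintype.sum_bijective Φ hbij _ _ ?_).symm
  intro T
  rw [map_mul, rename_rename, rename_rename]
  rw [mul_comm]
  congr 1
  · -- f part
    refine rename_eq_of_range_eq hf
      (Flip.injective.comp (Finset.orderEmbOfFin _ _).strictMono.injective)
      ((Finset.orderEmbOfFin _ _).strictMono.injective) ?_
    rw [Set.range_comp, Finset.range_orderEmbOfFin, Finset.range_orderEmbOfFin]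
    ext x
    simp [hΦ, Finset.mem_map_equiv, Set.mem_image_equiv]
  · -- g part
    refine rename_eq_of_range_eq hg
      (Flip.injective.comp (Finset.orderEmbOfFin _ _).strictMono.injective)
      ((Finset.orderEmbOfFin _ _).strictMono.injective) ?_
    rw [Set.range_comp, Finset.range_orderEmbOfFin, Finset.range_orderEmbOfFin]
    ext x
    simp [hΦ, Finset.mem_map_equiv, Set.mem_image_equiv]

lemma singleton_compl_card (j : Fin (d+1)) : (({j}ᶜ : Finset (Fin (d+1))).card) = d := by
  rw [Finset.card_compl, Finset.card_singleton, Fintype.card_fin]; omega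

lemma loopMul_phiF (f : MvPolynomial (Fin d) ℚ) (m : ℕ) :
    loopMul f (phiF m) = ∑ j : Fin (d+1),
      rename (Fin.succAbove j) f * (X j) ^ m := by
  rw [loopMul_eq]
  have hcard : ∀ j : Fin (d+1), (({j}ᶜ : Finset (Fin (d+1))).card) = d :=
    singleton_compl_card
  set β : Fin (d+1) → {S : Finset (Fin (d+1)) // S.card = d} :=
    fun j => ⟨{j}ᶜ, hcard j⟩ with hβ
  have hinj : Function.Injective β := by
    intro a b hab
    have := congrArg (fun S => S.1ᶜ) hab
    simp only [hβ, compl_compl] at this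
    exact Finset.singleton_injective this
  have hbij : Function.Bijective β := by
    refine (Fintype.bijective_iff_injective_and_card β).mpr ⟨hinj, ?_⟩
    rw [Fintype.card_fin, Fintype.card_finset_len, Fintype.card_fin,
      Nat.choose_succ_self_right]
  refine (Fintype.sum_bijective β hbij _ _ ?_).symm
  intro j
  congr 1
  · have heq : (fun i => ((β j).1.orderEmbOfFin (β j).2) i) = Fin.succAbove j := by
      refine strictMono_eq_of_range_eq (Finset.orderEmbOfFin _ _).strictMono
        (Fin.strictMono_succAbove j) ?_
      rw [Finset.range_orderEmbOfFin, Fin.range_succAbove]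
      simp [hβ]
    rw [heq]
  · -- g part : rename u (phiF m) = X j ^ m
    rw [phiF, map_pow, rename_X]
    congr 2
    have hc : (β j).1ᶜ = {j} := by simp [hβ]
    set y := ((β j).1ᶜ.orderEmbOfFin (cplcard (β j))) 0 with hy
    have hmem : y ∈ (β j).1ᶜ := Finset.orderEmbOfFin_mem _ _ 0
    rw [hc, Finset.mem_singleton] at hmem
    exact hmem.symm

/-- The permutation decomposition `Perm (Fin (d+1)) ← Fin (d+1) × Perm (Fin d)`. -/
def permExt {d : ℕ} (j : Fin (d+1)) (σ : Equiv.Perm (Fin d)) : Equiv.Perm (Fin (d+1)) :=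
  (finSuccEquiv' j).trans ((Equiv.optionCongr σ).trans (finSuccEquiv' (Fin.last d)).symm)

lemma permExt_self {d : ℕ} (j : Fin (d+1)) (σ : Equiv.Perm (Fin d)) :
    permExt j σ j = Fin.last d := by
  simp [permExt, finSuccEquiv'_at, finSuccEquiv'_symm_none]

lemma permExt_succAbove {d : ℕ} (j : Fin (d+1)) (σ : Equiv.Perm (Fin d)) (i : Fin d) :
    permExt j σ (j.succAbove i) = (σ i).castSucc := by
  simp [permExt, finSuccEquiv'_succAbove, finSuccEquiv'_symm_some, Fin.succAbove_last]

lemma permExt_bijective {d : ℕ} :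
    Function.Bijective (fun p : Fin (d+1) × Equiv.Perm (Fin d) => permExt p.1 p.2) := by
  refine (Fintype.bijective_iff_injective_and_card _).mpr ⟨?_, ?_⟩
  · rintro ⟨j, σ⟩ ⟨j', σ'⟩ h
    simp only at h
    have hj : j = j' := by
      have h1 : permExt j' σ' j = Fin.last d := by rw [← h]; exact permExt_self j σ
      have h2 : permExt j' σ' j' = Fin.last d := permExt_self j' σ'
      exact (permExt j' σ').injective (h1.trans h2.symm)
    subst hj
    have hσ : σ = σ' := by
      refine Equiv.ext fun i => ?_
      have h1 : permExt j σ (j.succAbove i) = permExt j σ' (j.succAbove i) := by rw [h]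
      rw [permExt_succAbove, permExt_succAbove] at h1
      exact Fin.castSucc_injective d h1
    rw [hσ]
  · rw [Fintype.card_prod, Fintype.card_perm, Fintype.card_perm,
      Fintype.card_fin, Fintype.card_fin, Nat.factorial_succ]

lemma iterLoop_eq (d : ℕ) (k : Fin d → ℕ) :
    iterLoop d k = ∑ τ : Equiv.Perm (Fin d),
      monomial (Finsupp.equivFunOnFinite.symm (k ∘ ⇑τ)) (1:ℚ) := by
  induction d with
  | zero =>
    rw [iterLoop]
    rw [Finset.sum_congr rfl (fun τ _ => by
      rw [Subsingleton.elim (Finsupp.equivFunOnFinite.symm (k ∘ ⇑τ)) 0]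
      : ∀ τ ∈ univ, _ = monomial (0 : Fin 0 →₀ ℕ) (1:ℚ))]
    rw [Finset.sum_const, card_univ]
    simp [monomial_zero']
  | succ d ih =>
    rw [iterLoop, loopMul_phiF, Finset.sum_congr rfl (fun j _ => by rw [ih])]
    have hterm : ∀ p : Fin (d+1) × Equiv.Perm (Fin d),
        rename (Fin.succAbove p.1)
            (monomial (Finsupp.equivFunOnFinite.symm ((fun i => k i.castSucc) ∘ ⇑p.2)) (1:ℚ))
            * X p.1 ^ (k (Fin.last d))
          = monomial (Finsupp.equivFunOnFinite.symm (k ∘ ⇑(permExt p.1 p.2))) (1:ℚ) := by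
      rintro ⟨j, σ⟩
      dsimp only
      rw [rename_monomial, X_pow_eq_monomial, monomial_mul, one_mul]
      have hexp : Finsupp.mapDomain (Fin.succAbove j)
            (Finsupp.equivFunOnFinite.symm ((fun i => k i.castSucc) ∘ ⇑σ))
            + Finsupp.single j (k (Fin.last d))
          = Finsupp.equivFunOnFinite.symm (k ∘ ⇑(permExt j σ)) := by
        ext x
        by_cases hx : x = j
        · subst hx
          rw [Finsupp.add_apply, Finsupp.mapDomain_notin_range, Finsupp.single_eq_same]
          · simp [permExt_self, Finsupp.coe_equivFunOnFinite_symm]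
          · rw [Fin.range_succAbove]; simp
        · obtain ⟨i, rfl⟩ := Fin.exists_succAbove_eq hx
          rw [Finsupp.add_apply, Finsupp.mapDomain_apply Fin.succAbove_right_injective,
            Finsupp.single_eq_of_ne' (Fin.succAbove_ne j i).symm]
          simp [permExt_succAbove, Finsupp.coe_equivFunOnFinite_symm]
      rw [hexp]
    calc ∑ j : Fin (d+1),
          rename (Fin.succAbove j) (∑ σ : Equiv.Perm (Fin d),
            monomial (Finsupp.equivFunOnFinite.symm ((fun i => k i.castSucc) ∘ ⇑σ)) (1:ℚ))
            * X j ^ (k (Fin.last d))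
        = ∑ p : Fin (d+1) × Equiv.Perm (Fin d),
            rename (Fin.succAbove p.1)
              (monomial (Finsupp.equivFunOnFinite.symm ((fun i => k i.castSucc) ∘ ⇑p.2)) (1:ℚ))
              * X p.1 ^ (k (Fin.last d)) := by
          rw [Fintype.sum_prod_type]
          refine Finset.sum_congr rfl fun j _ => ?_
          rw [map_sum, Finset.sum_mul]
      _ = ∑ τ : Equiv.Perm (Fin (d+1)),
            monomial (Finsupp.equivFunOnFinite.symm (k ∘ ⇑τ)) (1:ℚ) :=
          Fintype.sum_bijective _ permExt_bijective _ _ hterm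

variable {d : ℕ}

lemma coeff_iterLoop (k v : Fin d → ℕ) :
    coeff (Finsupp.equivFunOnFinite.symm v) (iterLoop d k)
      = ((Finset.univ.filter (fun τ : Equiv.Perm (Fin d) => k ∘ ⇑τ = v)).card : ℚ) := by
  rw [iterLoop_eq, coeff_sum]
  have hterm : ∀ τ : Equiv.Perm (Fin d),
      coeff (Finsupp.equivFunOnFinite.symm v)
          (monomial (Finsupp.equivFunOnFinite.symm (k ∘ ⇑τ)) (1:ℚ))
        = if k ∘ ⇑τ = v then (1:ℚ) else 0 := by
    intro τ
    rw [coeff_monomial]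
    by_cases h : k ∘ ⇑τ = v
    · rw [if_pos h, if_pos (by rw [h])]
    · rw [if_neg h, if_neg (fun hc => h (Finsupp.equivFunOnFinite.symm.injective hc))]
  rw [Finset.sum_congr rfl (fun τ _ => hterm τ), Finset.sum_boole]

lemma iterLoop_isSymmetric (k : Fin d → ℕ) : (iterLoop d k).IsSymmetric := by
  intro π
  rw [iterLoop_eq, map_sum]
  refine Fintype.sum_bijective (fun τ => τ * π⁻¹)
    (Group.mulRight_bijective π⁻¹) _ _ (fun τ => ?_)
  rw [rename_monomial]
  have hexp : Finsupp.mapDomain (⇑π) (Finsupp.equivFunOnFinite.symm (k ∘ ⇑τ))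
      = Finsupp.equivFunOnFinite.symm (k ∘ ⇑(τ * π⁻¹)) := by
    ext x
    rw [show (⇑π : Fin d → Fin d) = ⇑(π : Equiv.Perm (Fin d)) from rfl,
      Finsupp.mapDomain_equiv_apply]
    simp [Equiv.Perm.coe_mul, Finsupp.coe_equivFunOnFinite_symm]
  rw [hexp]

lemma antitone_comp_perm_eq {k k' : Fin d → ℕ} (hk : Antitone k) (hk' : Antitone k')
    {τ : Equiv.Perm (Fin d)} (h : k ∘ ⇑τ = k') : k = k' := by
  set K : Fin d → ℕᵒᵈ := fun i => OrderDual.toDual (k i) with hK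
  have hKmono : Monotone K := hk.dual_right
  have hKτ : Monotone (K ∘ ⇑τ) := by
    have : K ∘ ⇑τ = fun i => OrderDual.toDual (k' i) := by
      funext x; simp [hK, ← h]
    rw [this]; exact hk'.dual_right
  have h1 : K ∘ ⇑τ = K ∘ ⇑(Tuple.sort K) := Tuple.comp_sort_eq_comp_iff_monotone.mpr hKτ
  have h2 : K ∘ ⇑(1 : Equiv.Perm (Fin d)) = K ∘ ⇑(Tuple.sort K) :=
    Tuple.comp_sort_eq_comp_iff_monotone.mpr (by simpa using hKmono)
  have h3 : K ∘ ⇑τ = K := by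
    rw [h1, ← h2]; simp
  rw [← h]
  funext x
  have := congrFun h3 x
  simpa [hK] using this.symm

lemma exists_antitone (v : Fin d → ℕ) :
    ∃ k : Fin d → ℕ, Antitone k ∧ ∃ τ : Equiv.Perm (Fin d), k ∘ ⇑τ = v := by
  set V : Fin d → ℕᵒᵈ := fun i => OrderDual.toDual (v i) with hV
  refine ⟨fun i => v (Tuple.sort V i), ?_, (Tuple.sort V).symm, ?_⟩
  · intro a b hab
    exact Tuple.monotone_sort V hab
  · funext x
    simp

lemma coeff_comp_perm {p : MvPolynomial (Fin d) ℚ} (hp : p.IsSymmetric)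
    (v : Fin d → ℕ) (ρ : Equiv.Perm (Fin d)) :
    coeff (Finsupp.equivFunOnFinite.symm (v ∘ ⇑ρ)) p
      = coeff (Finsupp.equivFunOnFinite.symm v) p := by
  have hmap : Finsupp.equivFunOnFinite.symm (v ∘ ⇑ρ)
      = Finsupp.mapDomain ⇑ρ.symm (Finsupp.equivFunOnFinite.symm v) := by
    ext x
    rw [Finsupp.mapDomain_equiv_apply]
    simp [Finsupp.coe_equivFunOnFinite_symm]
  rw [hmap]
  conv_lhs => rw [← hp ρ.symm]
  exact coeff_rename_mapDomain _ ρ.symm.injective p _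

lemma iterLoop_linearIndependent (d : ℕ) :
    LinearIndependent ℚ
      (fun k : {k : Fin d → ℕ // Antitone k} => iterLoop d k.1) := by
  rw [linearIndependent_iff']
  intro s g hsum i hi
  have hc := congrArg (coeff (Finsupp.equivFunOnFinite.symm i.1)) hsum
  rw [coeff_sum, coeff_zero] at hc
  have hterm : ∀ j ∈ s,
      coeff (Finsupp.equivFunOnFinite.symm i.1) (g j • iterLoop d j.1)
        = g j * ((Finset.univ.filter
            (fun τ : Equiv.Perm (Fin d) => j.1 ∘ ⇑τ = i.1)).card : ℚ) := by
    intro j _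
    rw [coeff_smul, coeff_iterLoop]
    rfl
  rw [Finset.sum_congr rfl hterm] at hc
  have hzero : ∀ j ∈ s, j ≠ i →
      g j * ((Finset.univ.filter
        (fun τ : Equiv.Perm (Fin d) => j.1 ∘ ⇑τ = i.1)).card : ℚ) = 0 := by
    intro j _ hji
    have : (Finset.univ.filter
        (fun τ : Equiv.Perm (Fin d) => j.1 ∘ ⇑τ = i.1)) = ∅ := by
      refine Finset.filter_eq_empty_iff.mpr (fun τ _ => ?_)
      intro hτ
      exact hji (Subtype.ext (antitone_comp_perm_eq j.2 i.2 hτ))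
    rw [this]
    simp
  rw [Finset.sum_eq_single_of_mem i hi hzero] at hc
  have hpos : ((Finset.univ.filter
      (fun τ : Equiv.Perm (Fin d) => i.1 ∘ ⇑τ = i.1)).card : ℚ) ≠ 0 := by
    have h1 : (1 : Equiv.Perm (Fin d)) ∈ Finset.univ.filter
        (fun τ : Equiv.Perm (Fin d) => i.1 ∘ ⇑τ = i.1) := by
      refine Finset.mem_filter.mpr ⟨Finset.mem_univ _, ?_⟩
      funext x; rfl
    exact Nat.cast_ne_zero.mpr (Finset.card_ne_zero_of_mem h1)
  exact (mul_eq_zero.mp hc).resolve_right hpos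

lemma span_aux (d : ℕ) (n : ℕ) :
    ∀ (p : MvPolynomial (Fin d) ℚ), p.support.card ≤ n → p.IsSymmetric →
      p ∈ Submodule.span ℚ
        (Set.range fun k : {k : Fin d → ℕ // Antitone k} => iterLoop d k.1) := by
  induction n with
  | zero =>
    intro p hcard _
    have : p.support = ∅ := Finset.card_eq_zero.mp (Nat.le_zero.mp hcard)
    rw [MvPolynomial.support_eq_empty.mp this]
    exact Submodule.zero_mem _
  | succ n ih =>
    intro p hcard hsym
    by_cases hp0 : p = 0
    · rw [hp0]; exact Submodule.zero_mem _
    obtain ⟨m, hm⟩ := MvPolynomial.support_nonempty.mpr hp0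
    obtain ⟨k, hk, τ, hτ⟩ := exists_antitone ⇑m
    set c : ℚ := coeff m p with hc
    set N : ℚ := coeff m (iterLoop d k) with hN
    have hNcard : N = ((Finset.univ.filter
        (fun τ' : Equiv.Perm (Fin d) => k ∘ ⇑τ' = ⇑m)).card : ℚ) := by
      conv_lhs => rw [hN, ← Finsupp.equivFunOnFinite_symm_coe m, coeff_iterLoop]
    have hNne : N ≠ 0 := by
      rw [hNcard]
      refine Nat.cast_ne_zero.mpr (Finset.card_ne_zero_of_mem (Finset.mem_filter.mpr
        ⟨Finset.mem_univ _, hτ⟩))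
    set q := p - (c / N) • iterLoop d k with hq
    have hqsym : q.IsSymmetric := by
      intro π
      rw [hq, map_sub, map_smul, hsym π, iterLoop_isSymmetric k π]
    have hsupp : q.support ⊆ p.support := by
      intro u hu
      rw [MvPolynomial.mem_support_iff] at hu ⊢
      intro hup
      refine hu ?_
      rw [hq, coeff_sub, coeff_smul, hup]
      have hiter0 : coeff u (iterLoop d k) = 0 := by
        rw [← Finsupp.equivFunOnFinite_symm_coe u, coeff_iterLoop]
        refine Nat.cast_eq_zero.mpr (Finset.card_eq_zero.mpr
          (Finset.filter_eq_empty_iff.mpr (fun τ' _ hτ' => ?_)))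
        -- hτ' : k ∘ τ' = ⇑u ; derive coeff u p = c ≠ 0 contradiction with hup
        have hu' : ⇑u = ⇑m ∘ ⇑(τ'.trans τ.symm) := by
          funext x
          have h1 := congrFun hτ (τ.symm (τ' x))
          have h2 := congrFun hτ' x
          simp only [Function.comp_apply, Equiv.apply_symm_apply] at h1 h2
          simp only [Function.comp_apply, Equiv.trans_apply]
          rw [← h1, h2]
        have := coeff_comp_perm hsym ⇑m (τ'.trans τ.symm)
        rw [← hu'] at this
        rw [Finsupp.equivFunOnFinite_symm_coe, Finsupp.equivFunOnFinite_symm_coe] at this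
        rw [MvPolynomial.mem_support_iff] at hm
        exact hm (by rw [← this, hup])
      rw [hiter0]
      simp
    have hmq : m ∉ q.support := by
      rw [MvPolynomial.mem_support_iff]
      push_neg
      rw [hq, coeff_sub, coeff_smul, ← hc, ← hN]
      rw [smul_eq_mul, div_mul_cancel₀ c hNne, sub_self]
    have hlt : q.support.card ≤ n := by
      have hss : q.support ⊂ p.support := ⟨hsupp, fun hps => hmq (hps hm)⟩
      have := Finset.card_lt_card hss
      omega
    have hqmem := ih q hlt hqsym
    have : p = q + (c / N) • iterLoop d k := by rw [hq]; ring
    rw [this]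
    refine Submodule.add_mem _ hqmem (Submodule.smul_mem _ _ (Submodule.subset_span ?_))
    exact ⟨⟨k, hk⟩, rfl⟩

end Aux

/-- the shuffle algebra `⊕_d ℚ[x_1,…,x_d]^{S_d}` of the one-loop
quiver is a polynomial (free commutative) algebra on the generators
`φ_0, φ_1, φ_2, …`: the product is commutative (up to the identification
`Fin (e+d) ≃ Fin (d+e)` of variables), and the products `φ_{k_1} * ⋯ * φ_{k_d}`
over partitions `k_1 ≥ ⋯ ≥ k_d` form a `ℚ`-basis of the degree-`d` component
`ℚ[x_1,…,x_d]^{S_d}`. -/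
theorem coha_loop_polynomial_algebra :
    (∀ (d e : ℕ) (f : MvPolynomial (Fin d) ℚ) (g : MvPolynomial (Fin e) ℚ),
      f.IsSymmetric → g.IsSymmetric →
      loopMul f g = rename (⇑(finAddFlip : Fin (e + d) ≃ Fin (d + e))) (loopMul g f)) ∧
    (∀ d : ℕ,
      LinearIndependent ℚ
        (fun k : {k : Fin d → ℕ // Antitone k} => iterLoop d k.1) ∧
      Submodule.span ℚ
          (Set.range fun k : {k : Fin d → ℕ // Antitone k} => iterLoop d k.1) =
        (symmetricSubalgebra (Fin d) ℚ).toSubmodule) := by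
  constructor
  · intro d e f g hf hg
    exact loopMul_comm f g hf hg
  · intro d
    refine ⟨iterLoop_linearIndependent d, le_antisymm ?_ ?_⟩
    · rw [Submodule.span_le]
      rintro _ ⟨k, rfl⟩
      exact (mem_symmetricSubalgebra _).mpr (iterLoop_isSymmetric k.1)
    · intro p hp
      exact span_aux d p.support.card p le_rfl ((mem_symmetricSubalgebra p).mp hp)
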